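/- Let C ⊆ F_q^n be a linear code with parity check matrix H having columns H_1,...,H_n. For σ ⊆ {1,...,n}, define the nullity η(σ) = |σ| - dim span{H_i : i ∈ σ}. If D is an i-dimensional subcode of C whose support is minimal (with respect to inclusion) among supports of all i-dimensional subcodes of C, then η(supp(D)) = i. -/

import Mathlib

open Module Submodule LinearMap
open scoped Classical

section Aux
variable {F : Type*} [Field F] {n m : ℕ}

/-- extension by zero from functions on `S` to functions on `Fin n` -/
noncomputable def extZero (S : Set (Fin n)) : (↥S → F) →ₗ[F] (Fin n → F) where
  toFun y := fun j => if h : j ∈ S then y ⟨j, h⟩ else 0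
  map_add' y z := by ext j; by_cases h : j ∈ S <;> simp [h]
  map_smul' c y := by ext j; by_cases h : j ∈ S <;> simp [h]

lemma extZero_apply_mem (S : Set (Fin n)) (y : ↥S → F) {j : Fin n} (h : j ∈ S) :
    extZero S y j = y ⟨j, h⟩ := by simp [extZero, h]

lemma extZero_apply_not_mem (S : Set (Fin n)) (y : ↥S → F) {j : Fin n} (h : j ∉ S) :
    extZero S y j = 0 := by simp [extZero, h]

lemma extZero_inj (S : Set (Fin n)) : Function.Injective (extZero (F := F) S) := by
  intro y z h
  funext ⟨j, hj⟩
  have := congrFun h j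
  rwa [extZero_apply_mem S y hj, extZero_apply_mem S z hj] at this

lemma sum_extZero (S : Set (Fin n)) [Fintype ↥S] (H : Fin n → (Fin m → F)) (y : ↥S → F) :
    ∑ j, (extZero S y) j • H j = ∑ j : ↥S, y j • H j.1 := by
  have h1 : ∑ j : ↥S, y j • H j.1 = ∑ j : ↥S, (extZero S y) j.1 • H j.1 := by
    apply Finset.sum_congr rfl
    intro j _
    rw [extZero_apply_mem S y j.2]
  rw [h1, Finset.sum_set_coe (f := fun j => (extZero S y) j • H j)]
  refine (Finset.sum_subset (Finset.subset_univ _) ?_).symm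
  intro j _ hj
  rw [Set.mem_toFinset] at hj
  rw [extZero_apply_not_mem S y hj, zero_smul]

end Aux

set_option synthInstance.maxHeartbeats 400000 in
set_option maxHeartbeats 1000000 in
/-- If `D` is an `i`-dimensional subcode of `C = {x | ∑ j, x j • H j = 0}`
whose support is minimal (w.r.t. inclusion) among supports of all `i`-dimensional subcodes,
then the nullity `η(supp D) = |supp D| - dim span{H j : j ∈ supp D}` equals `i`. -/
theorem stmt_2 {F : Type*} [Field F] [Fintype F] {n m : ℕ}
    (H : Fin n → (Fin m → F)) (i : ℕ)
    (supp : Submodule F (Fin n → F) → Set (Fin n))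
    (hsupp : ∀ D, supp D = {j : Fin n | ∃ x ∈ D, x j ≠ 0})
    (D : Submodule F (Fin n → F))
    (hDC : ∀ x ∈ D, ∑ j, x j • H j = 0)
    (hdim : Module.finrank F D = i)
    (hmin : ∀ D' : Submodule F (Fin n → F),
      (∀ x ∈ D', ∑ j, x j • H j = 0) → Module.finrank F D' = i →
      supp D' ⊆ supp D → supp D' = supp D) :
    (supp D).ncard - Module.finrank F (Submodule.span F (H '' supp D)) = i := by
  classical
  set S := supp D with hS
  haveI : Fintype ↥S := S.toFinite.fintype
  set ψ := Fintype.linearCombination F (fun j : ↥S => H j.1) with hψ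
  set W := Submodule.map (extZero S) (LinearMap.ker ψ) with hW
  have hWsupp : ∀ x ∈ W, ∀ j, x j ≠ 0 → j ∈ S := by
    rintro x ⟨y, hy, rfl⟩ j hj
    by_contra h
    exact hj (extZero_apply_not_mem S y h)
  have hWcode : ∀ x ∈ W, ∑ j, x j • H j = 0 := by
    rintro x ⟨y, hy, rfl⟩
    rw [sum_extZero]
    exact hy
  have hext : ∀ x : Fin n → F, (∀ j, x j ≠ 0 → j ∈ S) →
      extZero S (fun j : ↥S => x j.1) = x := by
    intro x hx
    funext j
    by_cases h : j ∈ S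
    · rw [extZero_apply_mem _ _ h]
    · rw [extZero_apply_not_mem _ _ h]
      by_contra hne
      exact h (hx j fun h0 => hne h0.symm)
  have hmem : ∀ x : Fin n → F, (∀ j, x j ≠ 0 → j ∈ S) → (∑ j, x j • H j = 0) → x ∈ W := by
    intro x hx hcode
    refine ⟨fun j => x j.1, ?_, hext x hx⟩
    have : ψ (fun j : ↥S => x j.1) = ∑ j, x j • H j := by
      rw [hψ, Fintype.linearCombination_apply, ← sum_extZero S H (fun j : ↥S => x j.1),
        hext x hx]
    simpa [LinearMap.mem_ker, this] using hcode
  -- finrank computation for W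
  have e1 : Module.finrank F (LinearMap.ker ψ) = Module.finrank F W :=
    (Submodule.equivMapOfInjective _ (extZero_inj S) _).finrank_eq
  have e2 : Module.finrank F (LinearMap.range ψ) + Module.finrank F (LinearMap.ker ψ)
      = Module.finrank F (↥S → F) := LinearMap.finrank_range_add_finrank_ker ψ
  have e3 : LinearMap.range ψ = Submodule.span F (H '' S) := by
    rw [hψ, Fintype.range_linearCombination]
    congr 1
    rw [Set.image_eq_range]
  have e4 : Module.finrank F (↥S → F) = S.ncard := by
    rw [Module.finrank_fintype_fun_eq_card, Set.ncard_eq_toFinset_card', Set.toFinset_card]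
  -- D ≤ W hence i ≤ finrank W
  have hDW : D ≤ W := by
    intro x hx
    refine hmem x ?_ (hDC x hx)
    intro j hj
    rw [hS, hsupp]
    exact ⟨x, hx, hj⟩
  have hle : i ≤ Module.finrank F W := hdim ▸ Submodule.finrank_mono hDW
  -- finrank W ≤ i
  have hge : Module.finrank F W ≤ i := by
    by_contra hcon
    push_neg at hcon
    have hpos : 0 < Module.finrank F W := lt_of_le_of_lt (Nat.zero_le i) hcon
    obtain ⟨⟨x, hxW⟩, hx0⟩ := Module.finrank_pos_iff_exists_ne_zero.mp hpos
    have hxne : x ≠ 0 := by simpa using hx0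
    obtain ⟨j0, hj0⟩ := Function.ne_iff.mp hxne
    have hj0S : j0 ∈ S := hWsupp x hxW j0 (by simpa using hj0)
    set W' := (LinearMap.ker (LinearMap.proj j0 : (Fin n → F) →ₗ[F] F)) ⊓ W with hW'
    have hW'W : W' ≤ W := inf_le_right
    set f := (LinearMap.proj j0 : (Fin n → F) →ₗ[F] F).domRestrict W with hf
    have h5 : Module.finrank F (LinearMap.range f) + Module.finrank F (LinearMap.ker f)
        = Module.finrank F W := LinearMap.finrank_range_add_finrank_ker f
    have h6 : Module.finrank F (LinearMap.range f) ≤ 1 := by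
      have := Submodule.finrank_le (LinearMap.range f)
      rwa [Module.finrank_self] at this
    have h7 : Module.finrank F W' = Module.finrank F (LinearMap.ker f) := by
      have hcomap : Submodule.comap W.subtype W' = LinearMap.ker f := by
        rw [hW', Submodule.comap_inf, LinearMap.ker_domRestrict, Submodule.comap_subtype_self,
          inf_top_eq]
      have h7a : Module.finrank F (Submodule.comap W.subtype W') = Module.finrank F W' :=
        (Submodule.comapSubtypeEquivOfLe hW'W).finrank_eq
      rw [← h7a, hcomap]
    have h8 : i ≤ Module.finrank F W' := by omega
    obtain ⟨g, hg⟩ := exists_linearIndependent_of_le_finrank (R := F) (M := ↥W') h8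
    have hli : LinearIndependent F (fun k => ((g k : ↥W') : Fin n → F)) :=
      hg.map' W'.subtype (Submodule.ker_subtype _)
    set D' := Submodule.span F (Set.range (fun k => ((g k : ↥W') : Fin n → F))) with hD'
    have hD'le : D' ≤ W' := Submodule.span_le.mpr (by rintro _ ⟨k, rfl⟩; exact (g k).2)
    have hD'rank : Module.finrank F D' = i := by
      rw [hD', finrank_span_eq_card hli, Fintype.card_fin]
    have hD'code : ∀ x ∈ D', ∑ j, x j • H j = 0 := fun x hx => hWcode x (hW'W (hD'le hx))
    have hD'supp : supp D' ⊆ S := by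
      intro j hj
      rw [hsupp] at hj
      obtain ⟨x, hxD', hxj⟩ := hj
      exact hWsupp x (hW'W (hD'le hxD')) j hxj
    have heq : supp D' = S := hmin D' hD'code hD'rank hD'supp
    rw [← heq, hsupp] at hj0S
    obtain ⟨x', hx'D', hx'j0⟩ := hj0S
    have : x' j0 = 0 := (hD'le hx'D').1
    exact hx'j0 this
  have hWi : Module.finrank F W = i := le_antisymm hge hle
  have e3' : Module.finrank F (Submodule.span F (H '' S)) = Module.finrank F (LinearMap.range ψ) := by
    rw [e3]
  rw [e3']
  omega
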